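/- arXiv:2210.03227 — 2 statements merged into one kernel-verified Lean document; each statement's English description precedes it below -/
import Mathlib

section
/- Let R be a commutative ring, W ∈ R, and (E₀, E₁, φ₀, φ₁) a matrix factorization of W such that multiplication by W is injective on both E₀ and E₁. Set M = coker(φ₁ : E₁ → E₀), an R/(W)-module. Then the 2-periodic complex of R/(W)-modules ⋯ → E₀/W·E₀ → E₁/W·E₁ → E₀/W·E₀ → M → 0, whose maps alternate between the reduction of φ₁ (from the E₁-terms to the E₀-terms) and the reduction of φ₀ (from the E₀-terms to the E₁-terms), and whose final map is the projection E₀/W·E₀ → M, is exact. In particular, when E₀ and E₁ are finite free R-modules, M admits an infinite 2-periodic resolution by finite free R/(W)-modules. -/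
open Pointwise


lemma memWsmul {R : Type*} [CommRing R] (W : R) {E : Type*} [AddCommGroup E] [Module R E]
    (x : E) : x ∈ (W • (⊤ : Submodule R E)) ↔ ∃ y, W • y = x := by
  constructor
  · intro h
    rw [← SetLike.mem_coe, Submodule.coe_pointwise_smul] at h
    obtain ⟨y, -, rfl⟩ := h
    exact ⟨y, rfl⟩
  · rintro ⟨y, rfl⟩
    exact Submodule.smul_mem_pointwise_smul _ _ _ Submodule.mem_top

lemma freeQuot {R : Type*} [CommRing R] (W : R) {E : Type*} [AddCommGroup E] [Module R E]
    [Module.Finite R E] [Module.Free R E] :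
    Module.Finite (R ⧸ Ideal.span {W}) (E ⧸ (W • (⊤ : Submodule R E))) ∧
    Module.Free (R ⧸ Ideal.span {W}) (E ⧸ (W • (⊤ : Submodule R E))) := by
  set I := Ideal.span {W} with hI
  have hfin : Module.Finite R (E ⧸ (W • (⊤ : Submodule R E))) := inferInstance
  refine ⟨Module.Finite.of_restrictScalars_finite R _ _, ?_⟩
  classical
  let b := Module.Free.chooseBasis R E
  set ι := Module.Free.ChooseBasisIndex R E
  let f : E →ₗ[R] (ι →₀ R ⧸ I) :=
    (Finsupp.mapRange.linearMap (Algebra.linearMap R (R ⧸ I))) ∘ₗ b.repr.toLinearMap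
  have hsurj : Function.Surjective f := by
    intro g
    obtain ⟨h, rfl⟩ := Finsupp.mapRange_surjective (α := ι) _ (map_zero _)
      Ideal.Quotient.mk_surjective g
    refine ⟨b.repr.symm h, ?_⟩
    simp only [f, LinearMap.comp_apply, LinearEquiv.coe_coe, LinearEquiv.apply_symm_apply,
      Finsupp.mapRange.linearMap_apply]
    ext i
    simp [Ideal.Quotient.algebraMap_eq]
  have hker : LinearMap.ker f = W • (⊤ : Submodule R E) := by
    ext x
    rw [memWsmul, LinearMap.mem_ker]
    constructor
    · intro h
      have h' : ∀ i : ι, ∃ c : R, W * c = b.repr x i := by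
        intro i
        have := congrFun (congrArg (fun g : ι →₀ R ⧸ I => (g : ι → R ⧸ I)) h) i
        simp [f, Ideal.Quotient.algebraMap_eq] at this
        rw [Ideal.Quotient.eq_zero_iff_mem, hI, Ideal.mem_span_singleton] at this
        obtain ⟨c, hc⟩ := this
        exact ⟨c, hc.symm⟩
      choose c hc using h'
      let g : ι →₀ R := Finsupp.onFinset (b.repr x).support
        (fun i => if b.repr x i = 0 then 0 else c i)
        (by intro i hi; simpa using fun h => (hi (by simp [h])).elim)
      refine ⟨b.repr.symm g, ?_⟩
      apply b.repr.injective
      ext i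
      simp only [map_smul, LinearEquiv.apply_symm_apply, Finsupp.smul_apply, smul_eq_mul]
      show W * (if b.repr x i = 0 then 0 else c i) = b.repr x i
      split_ifs with h0
      · simp [h0]
      · exact hc i
    · rintro ⟨y, rfl⟩
      have hz : ∀ z : R, W • (Ideal.Quotient.mk I z) = (0 : R ⧸ I) := by
        intro z
        have h1 : W • (Ideal.Quotient.mk I z) = Ideal.Quotient.mk I (W * z) := rfl
        rw [h1, Ideal.Quotient.eq_zero_iff_mem]
        exact Ideal.mul_mem_right _ _ (Ideal.subset_span rfl)
      ext i
      simp [f, Ideal.Quotient.algebraMap_eq, hz]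
  let e : (E ⧸ (W • (⊤ : Submodule R E))) ≃ₗ[R] (ι →₀ R ⧸ I) :=
    (Submodule.quotEquivOfEq _ _ hker.symm).trans (f.quotKerEquivOfSurjective hsurj)
  exact Module.Free.of_basis (Module.Basis.ofRepr
    (e.extendScalarsOfSurjective Ideal.Quotient.mk_surjective))

/--
Let `R` be a commutative ring, `W ∈ R`, and `(E₀, E₁, φ₀, φ₁)` a matrix
factorization of `W` such that multiplication by `W` is injective on both `E₀` and `E₁`.
Set `M = coker (φ₁ : E₁ → E₀)`, an `R/(W)`-module.  Then the 2-periodic complex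
`⋯ → E₀/W·E₀ → E₁/W·E₁ → E₀/W·E₀ → M → 0`, whose maps alternate between the reduction of
`φ₁` and the reduction of `φ₀`, and whose final map is the projection `E₀/W·E₀ → M`, is
exact.  (By 2-periodicity, exactness everywhere amounts to: the projection is surjective,
the complex is exact at the final `E₀/W`-spot, exact at every `E₁/W`-spot, and exact at
every deeper `E₀/W`-spot.)  In particular, when `E₀` and `E₁` are finite free `R`-modules,
the terms `E₀/W·E₀` and `E₁/W·E₁` of this resolution of `M` are finite free `R/(W)`-modules.
-/
theorem stmt_1 {R : Type*} [CommRing R] (W : R)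
    {E₀ E₁ : Type*} [AddCommGroup E₀] [Module R E₀] [AddCommGroup E₁] [Module R E₁]
    (φ₀ : E₀ →ₗ[R] E₁) (φ₁ : E₁ →ₗ[R] E₀)
    (h01 : ∀ x : E₀, φ₁ (φ₀ x) = W • x)
    (h10 : ∀ x : E₁, φ₀ (φ₁ x) = W • x)
    (hW0 : ∀ x : E₀, W • x = 0 → x = 0)
    (hW1 : ∀ x : E₁, W • x = 0 → x = 0) :
    -- `W·E₀` and `W·E₁`, as submodules
    let WE₀ : Submodule R E₀ := W • (⊤ : Submodule R E₀)
    let WE₁ : Submodule R E₁ := W • (⊤ : Submodule R E₁)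
    -- the reduction `E₀/W·E₀ → E₁/W·E₁` of `φ₀`
    let φ₀bar : (E₀ ⧸ WE₀) →ₗ[R] (E₁ ⧸ WE₁) :=
      Submodule.mapQ WE₀ WE₁ φ₀ (by
        intro x hx
        rw [← SetLike.mem_coe, Submodule.coe_pointwise_smul] at hx
        obtain ⟨y, -, rfl⟩ := hx
        refine Submodule.mem_comap.mpr ?_
        rw [map_smul]
        exact Submodule.smul_mem_pointwise_smul _ _ _ Submodule.mem_top)
    -- the reduction `E₁/W·E₁ → E₀/W·E₀` of `φ₁`
    let φ₁bar : (E₁ ⧸ WE₁) →ₗ[R] (E₀ ⧸ WE₀) :=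
      Submodule.mapQ WE₁ WE₀ φ₁ (by
        intro x hx
        rw [← SetLike.mem_coe, Submodule.coe_pointwise_smul] at hx
        obtain ⟨y, -, rfl⟩ := hx
        refine Submodule.mem_comap.mpr ?_
        rw [map_smul]
        exact Submodule.smul_mem_pointwise_smul _ _ _ Submodule.mem_top)
    -- the projection `E₀/W·E₀ → M = coker φ₁`
    let π : (E₀ ⧸ WE₀) →ₗ[R] (E₀ ⧸ LinearMap.range φ₁) :=
      Submodule.mapQ WE₀ (LinearMap.range φ₁) LinearMap.id (by
        intro x hx
        rw [← SetLike.mem_coe, Submodule.coe_pointwise_smul] at hx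
        obtain ⟨y, -, rfl⟩ := hx
        exact Submodule.mem_comap.mpr
          (LinearMap.mem_range.mpr ⟨φ₀ y, by simpa using h01 y⟩))
    -- exactness of the 2-periodic complex `⋯ → E₀/W → E₁/W → E₀/W → M → 0`
    (Function.Surjective π ∧
      Function.Exact φ₁bar π ∧
      Function.Exact φ₀bar φ₁bar ∧
      Function.Exact φ₁bar φ₀bar) ∧
    -- in particular: if `E₀, E₁` are finite free over `R`, the terms of the resolution
    -- are finite free modules over `R/(W)`
    (Module.Finite R E₀ → Module.Free R E₀ → Module.Finite R E₁ → Module.Free R E₁ →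
      (Module.Finite (R ⧸ Ideal.span {W}) (E₀ ⧸ WE₀) ∧
       Module.Free (R ⧸ Ideal.span {W}) (E₀ ⧸ WE₀) ∧
       Module.Finite (R ⧸ Ideal.span {W}) (E₁ ⧸ WE₁) ∧
       Module.Free (R ⧸ Ideal.span {W}) (E₁ ⧸ WE₁))) := by
  
  intro WE₀ WE₁ φ₀bar φ₁bar π
  constructor
  · refine ⟨?_, ?_, ?_, ?_⟩
    · -- surjectivity of π
      intro z
      obtain ⟨x, rfl⟩ := Submodule.Quotient.mk_surjective _ z
      exact ⟨Submodule.Quotient.mk x, by simp [π, Submodule.mapQ_apply]⟩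
    · -- exactness at the final E₀/W spot
      intro z
      constructor
      · intro hz
        obtain ⟨x, rfl⟩ := Submodule.Quotient.mk_surjective _ z
        rw [show π (Submodule.Quotient.mk x) = Submodule.Quotient.mk x from rfl,
          Submodule.Quotient.mk_eq_zero] at hz
        obtain ⟨y, rfl⟩ := hz
        exact ⟨Submodule.Quotient.mk y, rfl⟩
      · rintro ⟨w, rfl⟩
        obtain ⟨y, rfl⟩ := Submodule.Quotient.mk_surjective _ w
        show π (φ₁bar _) = 0
        rw [show φ₁bar (Submodule.Quotient.mk y) = Submodule.Quotient.mk (φ₁ y) from rfl,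
          show π (Submodule.Quotient.mk (φ₁ y)) = Submodule.Quotient.mk (φ₁ y) from rfl,
          Submodule.Quotient.mk_eq_zero]
        exact ⟨y, rfl⟩
    · -- exactness at E₁/W spots
      intro z
      constructor
      · intro hz
        obtain ⟨x, rfl⟩ := Submodule.Quotient.mk_surjective _ z
        rw [show φ₁bar (Submodule.Quotient.mk x) = Submodule.Quotient.mk (φ₁ x) from rfl,
          Submodule.Quotient.mk_eq_zero] at hz
        obtain ⟨y, hy⟩ := (memWsmul W _).mp hz
        refine ⟨Submodule.Quotient.mk y, ?_⟩
        rw [show φ₀bar (Submodule.Quotient.mk y) = Submodule.Quotient.mk (φ₀ y) from rfl]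
        congr 1
        rw [← sub_eq_zero]
        apply hW1
        rw [smul_sub, ← map_smul φ₀, hy, h10, sub_self]
      · rintro ⟨w, rfl⟩
        obtain ⟨y, rfl⟩ := Submodule.Quotient.mk_surjective _ w
        show φ₁bar (φ₀bar _) = 0
        rw [show φ₀bar (Submodule.Quotient.mk y) = Submodule.Quotient.mk (φ₀ y) from rfl,
          show φ₁bar (Submodule.Quotient.mk (φ₀ y)) = Submodule.Quotient.mk (φ₁ (φ₀ y)) from rfl,
          Submodule.Quotient.mk_eq_zero, h01]
        exact (memWsmul W _).mpr ⟨y, rfl⟩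
    · -- exactness at deeper E₀/W spots
      intro z
      constructor
      · intro hz
        obtain ⟨x, rfl⟩ := Submodule.Quotient.mk_surjective _ z
        rw [show φ₀bar (Submodule.Quotient.mk x) = Submodule.Quotient.mk (φ₀ x) from rfl,
          Submodule.Quotient.mk_eq_zero] at hz
        obtain ⟨y, hy⟩ := (memWsmul W _).mp hz
        refine ⟨Submodule.Quotient.mk y, ?_⟩
        rw [show φ₁bar (Submodule.Quotient.mk y) = Submodule.Quotient.mk (φ₁ y) from rfl]
        congr 1
        rw [← sub_eq_zero]
        apply hW0
        rw [smul_sub, ← map_smul φ₁, hy, h01, sub_self]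
      · rintro ⟨w, rfl⟩
        obtain ⟨y, rfl⟩ := Submodule.Quotient.mk_surjective _ w
        show φ₀bar (φ₁bar _) = 0
        rw [show φ₁bar (Submodule.Quotient.mk y) = Submodule.Quotient.mk (φ₁ y) from rfl,
          show φ₀bar (Submodule.Quotient.mk (φ₁ y)) = Submodule.Quotient.mk (φ₀ (φ₁ y)) from rfl,
          Submodule.Quotient.mk_eq_zero, h10]
        exact (memWsmul W _).mpr ⟨y, rfl⟩
  · intro _ _ _ _
    obtain ⟨hf0, hfr0⟩ := freeQuot (E := E₀) W
    obtain ⟨hf1, hfr1⟩ := freeQuot (E := E₁) W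
    exact ⟨hf0, hfr0, hf1, hfr1⟩
end

section
/- Let R be a commutative ring, s ∈ R, and A = R[y]/(s·y). Let M be an R-module on which multiplication by s is injective, and let i_*M denote M regarded as an A-module via the R-algebra map A → R sending y to 0 (so y acts by 0 on M). Then the sequence of A-modules 0 → i_*M → A ⊗_R M → (A/sA) ⊗_R M → 0 is exact, where the first map sends m to s ⊗ m (this map is A-linear) and the second map is the canonical projection. Moreover A/sA is isomorphic as an R-algebra to (R/sR)[y]. -/
set_option maxHeartbeats 1000000
set_option synthInstance.maxHeartbeats 400000

open Polynomial TensorProduct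

set_option maxHeartbeats 8000000 in
/--
Let `R` be a commutative ring, `s ∈ R`, and `A = R[y]/(s·y)`.  Let `M` be an
`R`-module on which multiplication by `s` is injective, and let `i_*M` denote `M` regarded as
an `A`-module via the `R`-algebra map `ε : A → R` sending `y` to `0`.  Then the sequence of
`A`-modules `0 → i_*M → A ⊗_R M → (A/sA) ⊗_R M → 0` is exact, where the first map sends
`m` to `s ⊗ m` (and this map is `A`-linear: `a • (s ⊗ m) = s ⊗ (ε a • m)`), and the second
map is the canonical projection.  Moreover `A/sA ≅ (R/sR)[y]` as `R`-algebras.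
-/
theorem stmt_3 (R : Type) [CommRing R] (s : R)
    (M : Type) [AddCommGroup M] [Module R M]
    (hs : ∀ m : M, s • m = 0 → m = 0) :
    -- `A = R[y]/(s·y)`
    let A : Type := Polynomial R ⧸ Ideal.span {Polynomial.C s * Polynomial.X}
    -- the `R`-algebra map `ε : A → R` sending `y` to `0`
    let ε : A →ₐ[R] R :=
      Ideal.Quotient.liftₐ (Ideal.span {Polynomial.C s * Polynomial.X})
        (Polynomial.aeval (0 : R)) (by
          intro a ha
          obtain ⟨c, rfl⟩ := Ideal.mem_span_singleton'.mp ha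
          simp)
    -- the ideal `sA ⊆ A`
    let sA : Ideal A := Ideal.span {algebraMap R A s}
    -- the first map `i_*M → A ⊗_R M`, `m ↦ s ⊗ m`
    let ψ : M → (A ⊗[R] M) := fun m => (algebraMap R A s) ⊗ₜ[R] m
    -- the second map, the canonical projection `A ⊗_R M → (A/sA) ⊗_R M`
    let Φ : (A ⊗[R] M) →ₗ[R] ((A ⧸ sA) ⊗[R] M) :=
      LinearMap.rTensor M (Ideal.Quotient.mkₐ R sA).toLinearMap
    -- conclusions
    (∀ (a : A) (m : M), a • ψ m = ψ (ε a • m)) ∧   -- `ψ` is `A`-linear for the `i_*` structure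
    Function.Injective ψ ∧
    Function.Exact ψ Φ ∧
    Function.Surjective Φ ∧
    Nonempty ((A ⧸ sA) ≃ₐ[R] Polynomial (R ⧸ Ideal.span {s})) := by
  intro A ε sA ψ Φ
  set I : Ideal (Polynomial R) := Ideal.span {Polynomial.C s * Polynomial.X} with hI
  set J : Ideal (Polynomial R) := Ideal.span {(Polynomial.C s : Polynomial R)} with hJ
  -- basic facts
  have hmkC : ∀ r : R, algebraMap R A r = Ideal.Quotient.mk I (C r) := fun r => rfl
  have hε : ∀ p : Polynomial R, ε (Ideal.Quotient.mk I p) = p.eval 0 := by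
    intro p
    show Ideal.Quotient.liftₐ I (Polynomial.aeval (0 : R)) _ (Ideal.Quotient.mk I p) = p.eval 0
    change (Polynomial.aeval (0 : R)) p = p.eval 0
    simp [Polynomial.aeval_def, Polynomial.eval₂_at_zero, Polynomial.coeff_zero_eq_eval_zero]
  have key : ∀ a : A, a * algebraMap R A s = algebraMap R A (ε a) * algebraMap R A s := by
    intro a
    obtain ⟨p, rfl⟩ := Ideal.Quotient.mk_surjective a
    rw [hε, hmkC, hmkC, ← map_mul, ← map_mul]
    rw [Ideal.Quotient.eq]
    refine Ideal.mem_span_singleton'.mpr ⟨p.divX, ?_⟩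
    have h := Polynomial.X_mul_divX_add p
    rw [← Polynomial.coeff_zero_eq_eval_zero]
    linear_combination (Polynomial.C s) * h
  have key' : ∀ a : A, a * algebraMap R A s = ε a • algebraMap R A s := by
    intro a; rw [key]; exact (Algebra.smul_def _ _).symm
  -- conclusion 1 : A-linearity
  have c1 : ∀ (a : A) (m : M), a • ψ m = ψ (ε a • m) := by
    intro a m
    show a • ((algebraMap R A s) ⊗ₜ[R] m) = (algebraMap R A s) ⊗ₜ[R] (ε a • m)
    rw [TensorProduct.smul_tmul', smul_eq_mul, key', TensorProduct.smul_tmul]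
  -- the retraction used for injectivity
  set θ : (A ⊗[R] M) →ₗ[R] M :=
    (TensorProduct.lid R M).toLinearMap ∘ₗ LinearMap.rTensor M ε.toLinearMap with hθdef
  have hθ : ∀ m : M, θ (ψ m) = s • m := by
    intro m
    show (TensorProduct.lid R M) ((LinearMap.rTensor M ε.toLinearMap) ((algebraMap R A s) ⊗ₜ[R] m)) = s • m
    rw [LinearMap.rTensor_tmul]
    simp [ε.commutes]
  have c2 : Function.Injective ψ := by
    intro m₁ m₂ h
    have h2 : ψ (m₁ - m₂) = 0 := by
      show (algebraMap R A s) ⊗ₜ[R] (m₁ - m₂) = 0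
      rw [TensorProduct.tmul_sub]
      rw [show ((algebraMap R A s) ⊗ₜ[R] m₁ : A ⊗[R] M) = ψ m₁ from rfl,
        show ((algebraMap R A s) ⊗ₜ[R] m₂ : A ⊗[R] M) = ψ m₂ from rfl, h, sub_self]
    have h3 : s • (m₁ - m₂) = 0 := by
      rw [← hθ, h2, map_zero]
    have := hs _ h3
    exact sub_eq_zero.mp this
  -- exactness
  set μ : A →ₗ[R] A := LinearMap.mulLeft R (algebraMap R A s) with hμdef
  have hex : Function.Exact μ (Ideal.Quotient.mkₐ R sA).toLinearMap := by
    rw [LinearMap.exact_iff]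
    ext a
    simp only [LinearMap.mem_ker, LinearMap.mem_range, AlgHom.toLinearMap_apply,
      Ideal.Quotient.mkₐ_eq_mk, Ideal.Quotient.eq_zero_iff_mem]
    constructor
    · intro ha
      obtain ⟨b, hb⟩ := Ideal.mem_span_singleton'.mp ha
      exact ⟨b, by simpa [hμdef, mul_comm] using hb⟩
    · rintro ⟨b, rfl⟩
      exact Ideal.mem_span_singleton'.mpr ⟨b, by simp [hμdef, mul_comm]⟩
  have hsurjmk : Function.Surjective (Ideal.Quotient.mkₐ R sA).toLinearMap :=
    Ideal.Quotient.mk_surjective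
  have hEx2 := rTensor_exact (R := R) M hex hsurjmk
  have c4 : Function.Surjective Φ := LinearMap.rTensor_surjective M hsurjmk
  -- range identification
  have hrange : Set.range (LinearMap.rTensor M μ) = Set.range ψ := by
    apply Set.Subset.antisymm
    · rintro _ ⟨x, rfl⟩
      induction x using TensorProduct.induction_on with
      | zero =>
          refine ⟨0, ?_⟩
          show (algebraMap R A s) ⊗ₜ[R] (0 : M) = LinearMap.rTensor M μ 0
          rw [TensorProduct.tmul_zero, map_zero]
      | tmul a m =>
          refine ⟨ε a • m, ?_⟩
          show (algebraMap R A s) ⊗ₜ[R] (ε a • m) = LinearMap.rTensor M μ (a ⊗ₜ[R] m)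
          rw [LinearMap.rTensor_tmul]
          show _ = (algebraMap R A s * a) ⊗ₜ[R] m
          have hsc : algebraMap R A s * a = ε a • algebraMap R A s := by
            rw [mul_comm]; exact key' a
          rw [hsc]
          exact (TensorProduct.smul_tmul _ _ _).symm
      | add x y hx hy =>
          obtain ⟨mx, hmx⟩ := hx
          obtain ⟨my, hmy⟩ := hy
          refine ⟨mx + my, ?_⟩
          rw [map_add, ← hmx, ← hmy]
          show (algebraMap R A s) ⊗ₜ[R] (mx + my) = _
          rw [TensorProduct.tmul_add]
    · rintro _ ⟨m, rfl⟩
      refine ⟨(1 : A) ⊗ₜ[R] m, ?_⟩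
      show (algebraMap R A s * 1) ⊗ₜ[R] m = (algebraMap R A s) ⊗ₜ[R] m
      rw [mul_one]
  have c3 : Function.Exact ψ Φ := by
    intro x
    rw [← hrange]
    exact hEx2 x
  -- the algebra isomorphism
  have hJmap : sA = J.map (Ideal.Quotient.mkₐ R I) := by
    rw [Ideal.map_span, Set.image_singleton]
    rfl
  have hIJ : I ⊔ J = J := by
    rw [sup_eq_right]
    rw [hI, Ideal.span_le, Set.singleton_subset_iff]
    exact Ideal.mem_span_singleton.mpr ⟨X, rfl⟩
  have hJC : J = Ideal.map (Polynomial.C : R →+* Polynomial R) (Ideal.span {s}) := by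
    rw [Ideal.map_span, Set.image_singleton]
  have e2 : (Polynomial R ⧸ J) ≃ₐ[R] Polynomial (R ⧸ Ideal.span {s}) := by
    refine AlgEquiv.ofRingEquiv (f := (Ideal.quotEquivOfEq hJC).trans
      (Ideal.polynomialQuotientEquivQuotientPolynomial (Ideal.span {s})).symm) ?_
    intro r
    show (Ideal.polynomialQuotientEquivQuotientPolynomial (Ideal.span {s})).symm
        ((Ideal.quotEquivOfEq hJC) (algebraMap R (Polynomial R ⧸ J) r)) = _
    rw [show algebraMap R (Polynomial R ⧸ J) r = Ideal.Quotient.mk J (C r) from rfl,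
      Ideal.quotEquivOfEq_mk, Ideal.polynomialQuotientEquivQuotientPolynomial_symm_mk]
    simp [Polynomial.map_C, Polynomial.algebraMap_apply, Ideal.Quotient.algebraMap_eq]
  have e1 : (A ⧸ sA) ≃ₐ[R] Polynomial R ⧸ J :=
    (Ideal.quotientEquivAlgOfEq R hJmap).trans
      ((DoubleQuot.quotQuotEquivQuotSupₐ R I J).trans (Ideal.quotientEquivAlgOfEq R hIJ))
  exact ⟨c1, c2, c3, c4, ⟨e1.trans e2⟩⟩
end
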